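/- Let D be a strongly connected digraph, Z ⊆ V(D) a nonempty proper subset such that χ⃗(D[V(D)∖Z]) ≥ q − 1 for an integer q ≥ 2. Then there exists a directed path P in D of length exactly q − 1 whose endpoint lies in Z and all of whose other vertices lie outside Z. -/

import Mathlib

/-- A digraph on vertex type `V` is modeled as an arc relation `A : V → V → Prop`.
`Induce A X` is the arc relation of the induced subdigraph `D[X]`. -/
def Induce {V : Type*} (A : V → V → Prop) (X : Set V) : V → V → Prop :=
  fun u v => u ∈ X ∧ v ∈ X ∧ A u v

/-- `l` is (the vertex list of) a directed cycle: at least 2 vertices, consecutive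
vertices joined by arcs, all vertices distinct, and an arc from the last vertex back
to the first. Its length (number of arcs) is `l.length`. -/
def IsDicycleList {V : Type*} (A : V → V → Prop) (l : List V) : Prop :=
  2 ≤ l.length ∧ l.Chain' A ∧ l.Nodup ∧
    ∃ x y, l.getLast? = some x ∧ l.head? = some y ∧ A x y

/-- The digraph has no directed cycle. -/
def AcyclicRel {V : Type*} (A : V → V → Prop) : Prop :=
  ¬ ∃ l : List V, IsDicycleList A l

/-- The dichromatic number: the least `k` such that the vertices can be colored with
`k` colors so that each color class induces an acyclic subdigraph. -/
noncomputable def dichrom {V : Type*} (A : V → V → Prop) : ℕ :=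
  sInf {k | ∃ f : V → Fin k, ∀ i, AcyclicRel (Induce A {v | f v = i})}

/-- `l` is a directed path from `x` to `y` (possibly of length zero, i.e. `l = [x]`).
Its length (number of arcs) is `l.length - 1`. -/
def IsDipathFromTo {V : Type*} (A : V → V → Prop) (x y : V) (l : List V) : Prop :=
  l.Chain' A ∧ l.Nodup ∧ l.head? = some x ∧ l.getLast? = some y

/-- Directed distance from `x` to `y`: length of a shortest directed path. -/
noncomputable def ddist {V : Type*} (A : V → V → Prop) (x y : V) : ℕ :=
  sInf {n | ∃ l, IsDipathFromTo A x y l ∧ l.length = n + 1}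

/-- The digraph is strongly connected. -/
def StronglyConnectedRel {V : Type*} (A : V → V → Prop) : Prop :=
  ∀ x y : V, ∃ l, IsDipathFromTo A x y l

/-- The induced subdigraph `D[X]` is strongly connected. -/
def StronglyConnectedOn {V : Type*} (A : V → V → Prop) (X : Set V) : Prop :=
  ∀ x ∈ X, ∀ y ∈ X, ∃ l, IsDipathFromTo (Induce A X) x y l

/-- `X` is a strongly connected component: a maximal nonempty set inducing a strongly
connected subdigraph. -/
def IsSCC {V : Type*} (A : V → V → Prop) (X : Set V) : Prop :=
  X.Nonempty ∧ StronglyConnectedOn A X ∧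
    ∀ Y : Set V, X ⊆ Y → StronglyConnectedOn A Y → Y = X

/-- The internal vertices of a path given as a vertex list. -/
def Internal {V : Type*} (l : List V) : List V := l.dropLast.tail

/-- `D = (V, A)` contains a subdivision of `F = (W, B)` in which the subdivision path
of each arc `(u,v)` has length (number of arcs) satisfying the predicate `len u v`:
there are pairwise distinct branch vertices `b w`, and for each arc of `F` a directed
path of positive length between the corresponding branch vertices, these paths being
pairwise internally disjoint and internally avoiding all branch vertices. -/
def IsSubdivisionWith {V W : Type*} (A : V → V → Prop) (B : W → W → Prop)
    (len : W → W → ℕ → Prop) : Prop :=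
  ∃ b : W → V, Function.Injective b ∧
  ∃ P : ∀ u v, B u v → List V,
    (∀ u v (h : B u v), IsDipathFromTo A (b u) (b v) (P u v h) ∧
      2 ≤ (P u v h).length ∧ len u v ((P u v h).length - 1)) ∧
    (∀ u v (h : B u v), ∀ x ∈ Internal (P u v h),
      (∀ w : W, x ≠ b w) ∧
      ∀ u' v' (h' : B u' v'), (u, v) ≠ (u', v') → x ∉ P u' v' h')

section Helpers
variable {V : Type*}

/-- A `Z`-path: a nonempty directed path whose last vertex is in `Z` and all other
vertices avoid `Z`. -/
def ZPathL (A : V → V → Prop) (Z : Set V) (l : List V) : Prop :=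
  l.Chain' A ∧ l.Nodup ∧ (∃ x, l.getLast? = some x ∧ x ∈ Z) ∧ ∀ y ∈ l.dropLast, y ∉ Z

lemma dropLast_drop_eq (l : List V) (n : ℕ) :
    (l.drop n).dropLast = l.dropLast.drop n := by
  rw [List.dropLast_eq_take, List.dropLast_eq_take, List.drop_take, List.length_drop]
  congr 1
  omega

lemma dicycle_mono {R R' : V → V → Prop} {l : List V}
    (h : ∀ u w, u ∈ l → w ∈ l → R u w → R' u w) (hl : IsDicycleList R l) :
    IsDicycleList R' l := by
  obtain ⟨h2, hc, hn, x, y, hx, hy, harc⟩ := hl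
  refine ⟨h2, ?_, hn, x, y, hx, hy,
    h x y (List.mem_of_mem_getLast? (by simp [hx])) (List.mem_of_mem_head? (by simp [hy])) harc⟩
  rw [List.Chain', List.isChain_iff_getElem] at hc ⊢
  intro i hi
  exact h _ _ (List.getElem_mem _) (List.getElem_mem _) (hc i hi)

lemma dicycle_mem {R : V → V → Prop} {Q : V → Prop}
    (hR : ∀ u w, R u w → Q u ∧ Q w) {l : List V} (hl : IsDicycleList R l) :
    ∀ x ∈ l, Q x := by
  obtain ⟨h2, hc, hn, x, y, hx, hy, harc⟩ := hl
  intro a ha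
  rw [List.Chain', List.isChain_iff_getElem] at hc
  obtain ⟨⟨i, hi⟩, rfl⟩ := List.mem_iff_get.1 ha
  rcases lt_or_ge i (l.length - 1) with hlt | hge
  · exact (hR _ _ (hc i (by omega))).1
  · have hieq : i = l.length - 1 := le_antisymm (by omega) hge
    have hlast : l.getLast? = some (l.get ⟨i, hi⟩) := by
      rw [List.getLast?_eq_getElem?]
      subst hieq
      simp [List.getElem?_eq_getElem hi]
    rw [hx] at hlast
    obtain rfl : x = l.get ⟨i, hi⟩ := by injection hlast
    exact (hR _ _ harc).1

lemma head_ne_last {l : List V} (h2 : 2 ≤ l.length) (hn : l.Nodup)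
    {x y : V} (hx : l.getLast? = some x) (hy : l.head? = some y) : x ≠ y := by
  have h0 : 0 < l.length := by omega
  have h1 : l.length - 1 < l.length := by omega
  have hyv : l[0]? = some y := by
    have := List.head?_drop (l := l) (i := 0)
    simpa using hy ▸ this.symm
  have hxv : l[l.length - 1]? = some x := by
    have := List.getLast?_eq_getElem? (l := l)
    rw [hx] at this; exact this.symm
  rw [List.getElem?_eq_getElem h0] at hyv
  rw [List.getElem?_eq_getElem h1] at hxv
  obtain rfl : l[0] = y := by injection hyv
  obtain rfl : l[l.length - 1] = x := by injection hxv
  intro he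
  have := (List.Nodup.getElem_inj_iff hn).1 he
  omega

/-- successor of a vertex on a dicycle -/
lemma dicycle_succ {R : V → V → Prop} {l : List V} (hl : IsDicycleList R l)
    {v : V} (hv : v ∈ l) : ∃ w ∈ l, w ≠ v ∧ R v w := by
  obtain ⟨h2, hc, hn, x, y, hx, hy, harc⟩ := hl
  rw [List.Chain', List.isChain_iff_getElem] at hc
  obtain ⟨⟨i, hi⟩, rfl⟩ := List.mem_iff_get.1 hv
  rcases lt_or_ge i (l.length - 1) with hlt | hge
  · refine ⟨l.get ⟨i + 1, by omega⟩, List.get_mem _ _, ?_, hc i (by omega)⟩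
    intro he
    have := List.Nodup.get_inj_iff hn |>.1 he
    simp only [Fin.mk.injEq] at this
    omega
  · have hieq : i = l.length - 1 := le_antisymm (by omega) hge
    have hlast : l.getLast? = some (l.get ⟨i, hi⟩) := by
      rw [List.getLast?_eq_getElem?]
      subst hieq
      simp [List.getElem?_eq_getElem hi]
    rw [hx] at hlast
    obtain rfl : x = l.get ⟨i, hi⟩ := by injection hlast
    refine ⟨y, List.mem_of_mem_head? (by simp [hy]), ?_, harc⟩
    intro he
    exact head_ne_last h2 hn hx hy he.symm
end Helpers

section Helpers2
variable {V : Type*}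

lemma zpath_drop {A : V → V → Prop} {Z : Set V} {l : List V} (h : ZPathL A Z l)
    (n : ℕ) (hn : n < l.length) : ZPathL A Z (l.drop n) := by
  obtain ⟨hc, hnd, ⟨x, hx, hxZ⟩, hdl⟩ := h
  refine ⟨hc.drop n, (l.drop_sublist n).nodup hnd, ⟨x, ?_, hxZ⟩, ?_⟩
  · rw [List.getLast?_drop, if_neg (by omega)]
    exact hx
  · intro y hy
    rw [dropLast_drop_eq] at hy
    exact hdl y (List.mem_of_mem_drop hy)

lemma zp_len2 {A : V → V → Prop} {Z : Set V} {l : List V} (h : ZPathL A Z l)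
    {v : V} (hv : l.head? = some v) (hvZ : v ∉ Z) : 2 ≤ l.length := by
  obtain ⟨hc, hnd, ⟨x, hx, hxZ⟩, hdl⟩ := h
  rcases l with _ | ⟨a, _ | ⟨b, t⟩⟩
  · simp at hv
  · exfalso
    apply hvZ
    obtain rfl : a = v := by injection hv
    obtain rfl : a = x := by simpa [List.getLast?] using hx
    exact hxZ
  · simp

/-- truncate a path ending in `Z` at its first `Z`-vertex -/
lemma trunc {A : V → V → Prop} {Z : Set V} :
    ∀ (l : List V) (v z : V), l.Chain' A → l.Nodup → l.head? = some v →
      l.getLast? = some z → z ∈ Z →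
      ∃ P : List V, ZPathL A Z P ∧ P.head? = some v ∧ ∀ x ∈ P, x ∈ l := by
  intro l
  induction l with
  | nil => intro v z _ _ hh; simp at hh
  | cons a rest ih =>
    intro v z hc hn hh hl hz
    injection hh with hh'
    subst hh'
    by_cases hvZ : a ∈ Z
    · exact ⟨[a], ⟨List.isChain_singleton _, by simp, ⟨a, by simp, hvZ⟩, by simp⟩, by simp, by simp⟩
    · match rest, hl with
      | [], hl =>
        obtain rfl : a = z := by simpa [List.getLast?] using hl
        exact absurd hz hvZ
      | b :: rest', hl =>
        have hl' : (b :: rest').getLast? = some z := by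
          rwa [List.getLast?_cons_cons] at hl
        obtain ⟨P, hP, hPh, hPsub⟩ := ih b z (hc.tail) (hn.of_cons) rfl hl' hz
        refine ⟨a :: P, ⟨?_, ?_, ?_, ?_⟩, rfl, ?_⟩
        · match P, hPh with
          | b' :: P', hPh =>
            obtain hb : b' = b := by injection hPh
            subst hb
            exact List.isChain_cons_cons.2 ⟨(List.isChain_cons_cons.1 hc).1, hP.1⟩
        · refine List.nodup_cons.2 ⟨fun hvP => ?_, hP.2.1⟩
          exact (List.nodup_cons.1 hn).1 (hPsub a hvP)
        · obtain ⟨x, hx, hxZ⟩ := hP.2.2.1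
          refine ⟨x, ?_, hxZ⟩
          match P, hPh with
          | b' :: P', hPh => rw [List.getLast?_cons_cons]; exact hx
        · intro y hy
          match P, hPh with
          | b' :: P', hPh =>
            rw [show ((a :: b' :: P').dropLast) = a :: (b' :: P').dropLast by simp] at hy
            rcases List.mem_cons.1 hy with rfl | hy
            · exact hvZ
            · exact hP.2.2.2 y hy
        · intro x hx
          rcases List.mem_cons.1 hx with rfl | hx
          · exact List.mem_cons_self
          · exact List.mem_cons_of_mem _ (hPsub x hx)

end Helpers2

section Color
variable {V : Type*}

def colorSet (A : V → V → Prop) : Set ℕ :=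
  {k | ∃ f : V → Fin k, ∀ i, AcyclicRel (Induce A {v | f v = i})}

lemma card_mem_colorSet [Fintype V] (A : V → V → Prop) :
    Fintype.card V ∈ colorSet A := by
  refine ⟨Fintype.equivFin V, fun i => ?_⟩
  rintro ⟨l, h2, hc, hn, x, y, hx, hy, harc⟩
  obtain ⟨hx1, hy1, -⟩ := harc
  have : x = y := (Fintype.equivFin V).injective (hx1.trans hy1.symm)
  exact head_ne_last h2 hn hx hy this

lemma colorSet_up {A : V → V → Prop} {m m' : ℕ} (h : m ∈ colorSet A) (hm : m ≤ m') :
    m' ∈ colorSet A := by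
  obtain ⟨f, hf⟩ := h
  refine ⟨fun v => Fin.castLE hm (f v), fun i => ?_⟩
  rintro ⟨l, hcyc⟩
  obtain ⟨-, -, -, x, y, -, -, hxc, -, -⟩ := id hcyc
  have hxc' : Fin.castLE hm (f x) = i := hxc
  refine hf (f x) ⟨l, dicycle_mono (fun u w _ _ hr => ?_) hcyc⟩
  obtain ⟨hu, hw, hA⟩ := hr
  have hu' : Fin.castLE hm (f u) = i := hu
  have hw' : Fin.castLE hm (f w) = i := hw
  exact ⟨Fin.castLE_injective hm (hu'.trans hxc'.symm),
         Fin.castLE_injective hm (hw'.trans hxc'.symm), hA⟩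

lemma mem_colorSet_of_dichrom_le [Fintype V] {A : V → V → Prop} {m : ℕ}
    (h : dichrom A ≤ m) : m ∈ colorSet A :=
  colorSet_up (Nat.sInf_mem ⟨Fintype.card V, card_mem_colorSet A⟩) h

lemma dichrom_le_of_mem {A : V → V → Prop} {m : ℕ} (h : m ∈ colorSet A) :
    dichrom A ≤ m := Nat.sInf_le h

lemma induce_univ (A : V → V → Prop) : Induce A Set.univ = A :=
  funext fun u => funext fun v =>
    propext ⟨fun h => h.2.2, fun h => ⟨trivial, trivial, h⟩⟩

end Color

section CycleLemma
variable {V : Type*}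

lemma exists_long_cycle [Fintype V] (B : V → V → Prop) (k : ℕ) (hk : 2 ≤ k)
    (h : k ≤ dichrom B) : ∃ l, IsDicycleList B l ∧ k ≤ l.length := by
  classical
  -- choose a card-minimal S with dichromatic number ≥ k
  set 𝒯 : Set ℕ := {n | ∃ S : Finset V, k ≤ dichrom (Induce B ↑S) ∧ S.card = n} with h𝒯
  have huniv : k ≤ dichrom (Induce B ↑(Finset.univ : Finset V)) := by
    rwa [Finset.coe_univ, induce_univ]
  have hTne : 𝒯.Nonempty := ⟨_, Finset.univ, huniv, rfl⟩
  obtain ⟨S, hS, hScard⟩ := Nat.sInf_mem hTne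
  have hmin : ∀ S' : Finset V, S'.card < S.card → dichrom (Induce B ↑S') ≤ k - 1 := by
    intro S' hlt
    by_contra hk'
    push_neg at hk'
    have h1 : sInf 𝒯 ≤ S'.card := Nat.sInf_le ⟨S', by omega, rfl⟩
    omega
  have hSne : S.Nonempty := by
    rw [Finset.nonempty_iff_ne_empty]
    rintro rfl
    have h1 : (1 : ℕ) ∈ colorSet (Induce B ↑(∅ : Finset V)) := by
      refine ⟨fun _ => 0, fun i => ?_⟩
      rintro ⟨l, -, -, -, x, y, -, -, harc⟩
      exact absurd harc.2.2.1 (by simp)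
    have := dichrom_le_of_mem h1
    omega
  -- minimum out-degree ≥ k - 1 inside S
  have hdeg : ∀ v ∈ S, k - 1 ≤ ((S.erase v).filter (fun w => B v w)).card := by
    intro v hv
    by_contra hlt
    push_neg at hlt
    set N := (S.erase v).filter (fun w => B v w) with hNdef
    have hc1 : dichrom (Induce B ↑(S.erase v)) ≤ k - 1 :=
      hmin _ (Finset.card_erase_lt_of_mem hv)
    obtain ⟨f, hf⟩ := mem_colorSet_of_dichrom_le hc1
    have hcard : (N.image f).card < k - 1 := lt_of_le_of_lt Finset.card_image_le hlt
    have hex : ∃ c : Fin (k-1), c ∉ N.image f := by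
      by_contra hall
      push_neg at hall
      have h2 : (Finset.univ : Finset (Fin (k-1))).card ≤ (N.image f).card :=
        Finset.card_le_card (fun c _ => hall c)
      simp only [Finset.card_univ, Fintype.card_fin] at h2
      omega
    obtain ⟨c, hcfree⟩ := hex
    set g := Function.update f v c with hg
    have hgood : dichrom (Induce B ↑S) ≤ k - 1 := by
      apply dichrom_le_of_mem
      refine ⟨g, fun i => ?_⟩
      rintro ⟨l, hcyc⟩
      by_cases hvl : v ∈ l
      · obtain ⟨w, hwl, hwv, hvw⟩ := dicycle_succ hcyc hvl
        have hgv : g v = i := hvw.1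
        have hgw : g w = i := hvw.2.1
        have hwS : w ∈ S := hvw.2.2.2.1
        have hBvw : B v w := hvw.2.2.2.2
        have hgvc : g v = c := by rw [hg]; simp
        have hfw : f w = c := by
          have h3 : g w = f w := by rw [hg]; exact Function.update_of_ne hwv c f
          rw [← h3, hgw, ← hgv, hgvc]
        exact hcfree (Finset.mem_image.2 ⟨w,
          Finset.mem_filter.2 ⟨Finset.mem_erase.2 ⟨hwv, hwS⟩, hBvw⟩, hfw⟩)
      · refine hf i ⟨l, dicycle_mono (fun u w hu hw hr => ?_) hcyc⟩
        have huv : u ≠ v := fun e => hvl (e ▸ hu)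
        have hwv : w ≠ v := fun e => hvl (e ▸ hw)
        have h1 : g u = i := hr.1
        have h2 : g w = i := hr.2.1
        rw [hg, Function.update_of_ne huv] at h1
        rw [hg, Function.update_of_ne hwv] at h2
        have huS : u ∈ S := hr.2.2.1
        have hwS : w ∈ S := hr.2.2.2.1
        exact ⟨h1, h2, Finset.mem_coe.2 (Finset.mem_erase.2 ⟨huv, huS⟩),
          Finset.mem_coe.2 (Finset.mem_erase.2 ⟨hwv, hwS⟩), hr.2.2.2.2⟩
    omega
  -- longest path within S
  set Good : List V → Prop :=
    fun l => l ≠ [] ∧ l.Chain' (Induce B ↑S) ∧ l.Nodup ∧ ∀ x ∈ l, x ∈ S with hGood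
  set T : Set ℕ := {n | ∃ l, Good l ∧ l.length = n} with hT
  obtain ⟨v₀, hv₀⟩ := hSne
  have hTne' : T.Nonempty := ⟨1, [v₀], ⟨by simp, List.isChain_singleton _, by simp, by simp [hv₀]⟩, rfl⟩
  have hbdd : BddAbove T := by
    refine ⟨Fintype.card V, ?_⟩
    rintro n ⟨l, ⟨-, -, hnd, -⟩, rfl⟩
    exact hnd.length_le_card
  obtain ⟨l, hG, hlen⟩ := Nat.sSup_mem hTne' hbdd
  obtain ⟨hlne, hchain, hnd, hmemS⟩ := hG
  have hl0 : 0 < l.length := List.length_pos_iff.2 hlne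
  set e := l.getLast hlne with he
  have hel : l.getLast? = some e := List.getLast?_eq_getLast hlne
  have heS : e ∈ S := hmemS e (List.getLast_mem hlne)
  set N := (S.erase e).filter (fun w => B e w) with hNdef
  have hNcard : k - 1 ≤ N.card := hdeg e heS
  have hNsub : ∀ w ∈ N, w ∈ l := by
    intro w hw
    by_contra hwl
    obtain ⟨hwe, hwS⟩ := Finset.mem_erase.1 (Finset.mem_filter.1 hw).1
    have hBew : B e w := (Finset.mem_filter.1 hw).2
    have hGoodl : Good (l ++ [w]) := by
      refine ⟨by simp, ?_, ?_, ?_⟩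
      · refine List.isChain_append.2 ⟨hchain, by simp, ?_⟩
        intro x hx y hy
        rw [hel] at hx
        simp only [Option.mem_def, Option.some.injEq] at hx
        simp only [List.head?_cons, Option.mem_def, Option.some.injEq] at hy
        subst hx; subst hy
        exact ⟨Finset.mem_coe.2 heS, Finset.mem_coe.2 hwS, hBew⟩
      · refine List.nodup_append.2 ⟨hnd, by simp, ?_⟩
        intro a ha b hb he
        simp only [List.mem_singleton] at hb
        subst he
        subst hb
        exact hwl ha
      · intro x hx
        rcases List.mem_append.1 hx with hx | hx
        · exact hmemS x hx
        · simp only [List.mem_singleton] at hx; subst hx; exact hwS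
    have hmem : l.length + 1 ∈ T := ⟨l ++ [w], hGoodl, by simp⟩
    have := le_csSup hbdd hmem
    omega
  have hNne : N.Nonempty := Finset.card_pos.1 (by omega)
  obtain ⟨u, huN, humin⟩ := N.exists_min_image (fun w => l.idxOf w) hNne
  have hul : u ∈ l := hNsub u huN
  have hjlt : l.idxOf u < l.length := List.idxOf_lt_length_iff.2 hul
  have hgetu : l[l.idxOf u]? = some u := by
    rw [List.getElem?_eq_getElem hjlt, List.getElem_idxOf hjlt]
  obtain ⟨hue, huS⟩ := Finset.mem_erase.1 (Finset.mem_filter.1 huN).1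
  have hBeu : B e u := (Finset.mem_filter.1 huN).2
  have hidx_le : ∀ w ∈ N, l.idxOf w ≤ l.length - 2 := by
    intro w hw
    have hwl := hNsub w hw
    have hlt := List.idxOf_lt_length_iff.2 hwl
    have hwe : w ≠ e := (Finset.mem_erase.1 (Finset.mem_filter.1 hw).1).1
    by_contra hgt
    push_neg at hgt
    have hidx : l.idxOf w = l.length - 1 := by omega
    apply hwe
    have h5 : l[l.length - 1]? = some w := by
      rw [← hidx, List.getElem?_eq_getElem hlt, List.getElem_idxOf hlt]
    have h6 : l[l.length - 1]? = some e := by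
      rw [← List.getLast?_eq_getElem?, hel]
    rw [h5] at h6
    injection h6
  set I := N.image (fun w => l.idxOf w) with hI
  have hIcard : I.card = N.card :=
    Finset.card_image_of_injOn (fun a ha b hb hab =>
      (List.idxOf_inj (hNsub a ha)).1 hab)
  have hIsub : I ⊆ Finset.Icc (l.idxOf u) (l.length - 2) := by
    intro i hi
    obtain ⟨w, hw, rfl⟩ := Finset.mem_image.1 hi
    exact Finset.mem_Icc.2 ⟨humin w hw, hidx_le w hw⟩
  have hcard2 : N.card ≤ l.length - 2 + 1 - l.idxOf u := by
    have h6 := Finset.card_le_card hIsub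
    rwa [Nat.card_Icc, hIcard] at h6
  have hjle : l.idxOf u ≤ l.length - 2 := hidx_le u huN
  have hL2 : 2 ≤ l.length := by
    rcases l with _ | ⟨a, _ | ⟨b, t⟩⟩
    · exact absurd rfl hlne
    · exfalso
      apply hue
      have h7 : u = a := by simpa using hul
      have h8 : e = a := by simp [he, List.getLast]
      rw [h7, h8]
    · simp
  have hlenk : k ≤ l.length - l.idxOf u := by
    have c1 : k - 1 ≤ N.card := hNcard
    have c2 : N.card ≤ l.length - 2 + 1 - l.idxOf u := hcard2
    have c3 : l.idxOf u ≤ l.length - 2 := hjle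
    have c4 : l.idxOf u < l.length := hjlt
    omega
  refine ⟨l.drop (l.idxOf u), ?_, ?_⟩
  · refine dicycle_mono (fun a b _ _ hr => hr.2.2) ⟨?_, hchain.drop _,
      (l.drop_sublist _).nodup hnd, e, u, ?_, ?_, Finset.mem_coe.2 heS, Finset.mem_coe.2 huS, hBeu⟩
    · rw [List.length_drop]; omega
    · rw [List.getLast?_drop, if_neg (by omega)]; exact hel
    · rw [List.head?_drop]; exact hgetu
  · rw [List.length_drop]; omega

end CycleLemma

/-- In a strongly connected digraph, if the complement of a nonempty proper set `Z` has
dichromatic number at least `q - 1` (`q ≥ 2`), then there is a directed path of length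
exactly `q - 1` meeting `Z` only in its final vertex. -/
theorem stmt_16 {V : Type*} [Fintype V] (A : V → V → Prop)
    (hSC : StronglyConnectedRel A) (Z : Set V) (hne : Z.Nonempty)
    (hprop : Z ≠ Set.univ) (q : ℕ) (hq : 2 ≤ q)
    (h : q - 1 ≤ dichrom (Induce A Zᶜ)) :
    ∃ (l : List V) (x : V), l.Chain' A ∧ l.Nodup ∧ l.length = q ∧
      l.getLast? = some x ∧ x ∈ Z ∧ ∀ z ∈ l.dropLast, z ∉ Z := by
  classical
  obtain ⟨z₀, hz₀⟩ := hne
  have zp_exists : ∀ v : V, ∃ P, ZPathL A Z P ∧ P.head? = some v := by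
    intro v
    obtain ⟨l, hc, hn, hh, hl⟩ := hSC v z₀
    obtain ⟨P, hP, hPh, -⟩ := trunc l v z₀ hc hn hh hl hz₀
    exact ⟨P, hP, hPh⟩
  by_cases hlong : ∃ P, ZPathL A Z P ∧ q ≤ P.length
  · obtain ⟨P, hP, hq'⟩ := hlong
    have hlt : P.length - q < P.length := by omega
    obtain ⟨hc, hn, ⟨x, hx, hxZ⟩, hdl⟩ := zpath_drop hP _ hlt
    refine ⟨P.drop (P.length - q), x, hc, hn, ?_, hx, hxZ, hdl⟩
    rw [List.length_drop]; omega
  · push_neg at hlong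
    have hshort : ∀ P, ZPathL A Z P → P.length ≤ q - 1 := by
      intro P hP
      have := hlong P hP
      omega
    have hq3 : 3 ≤ q := by
      by_contra hq2
      obtain ⟨v, hv⟩ := (Set.ne_univ_iff_exists_notMem Z).1 hprop
      obtain ⟨P, hP, hPh⟩ := zp_exists v
      have h2 := zp_len2 hP hPh hv
      have := hshort P hP
      omega
    have hk2 : 2 ≤ q - 1 := by omega
    obtain ⟨C, hCyc, hClen⟩ := exists_long_cycle (Induce A Zᶜ) (q-1) hk2 h
    have hCZ : ∀ x ∈ C, x ∉ Z :=
      dicycle_mem (fun u w hr => ⟨hr.1, hr.2.1⟩) hCyc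
    have hCA : IsDicycleList A C := dicycle_mono (fun u w _ _ hr => hr.2.2) hCyc
    have hCnd : C.Nodup := hCA.2.2.1
    have hCne : C ≠ [] := by
      intro he
      rw [he] at hClen
      simp at hClen
      omega
    obtain ⟨c0, hc0⟩ := List.exists_mem_of_ne_nil C hCne
    -- minimal Z-path starting on the cycle
    set T : Set ℕ := {n | ∃ P v, ZPathL A Z P ∧ P.head? = some v ∧ v ∈ C ∧ P.length = n}
      with hT
    have hTne : T.Nonempty := by
      obtain ⟨P, hP, hPh⟩ := zp_exists c0
      exact ⟨P.length, P, c0, hP, hPh, hc0, rfl⟩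
    obtain ⟨P, u, hP, hPu, huC, hPlen⟩ := Nat.sInf_mem hTne
    have hm2 : 2 ≤ P.length := zp_len2 hP hPu (hCZ u huC)
    have hmq : P.length ≤ q - 1 := hshort P hP
    -- the minimal path meets the cycle only at its start
    have hdisj : ∀ x ∈ P, x ≠ u → x ∉ C := by
      intro x hx hxu hxC
      have hidx : P.idxOf x < P.length := List.idxOf_lt_length_iff.2 hx
      have hpos : 1 ≤ P.idxOf x := by
        by_contra h0
        push_neg at h0
        apply hxu
        have hi0 : P.idxOf x = 0 := by omega
        have h5 : P[P.idxOf x]? = some x := by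
          rw [List.getElem?_eq_getElem hidx, List.getElem_idxOf hidx]
        rw [hi0] at h5
        have h6 : P[0]? = some u := by
          have := List.head?_drop (l := P) (i := 0)
          rw [List.drop_zero, hPu] at this
          exact this.symm
        rw [h5] at h6
        exact Option.some.inj h6
      have hQ := zpath_drop hP (P.idxOf x) hidx
      have hQh : (P.drop (P.idxOf x)).head? = some x := by
        rw [List.head?_drop, List.getElem?_eq_getElem hidx, List.getElem_idxOf hidx]
      have hQT : (P.drop (P.idxOf x)).length ∈ T := ⟨_, x, hQ, hQh, hxC, rfl⟩
      have hle := Nat.sInf_le hQT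
      rw [List.length_drop] at hle
      omega
    -- rotate the cycle so that u comes last
    have hpC : C.idxOf u < C.length := List.idxOf_lt_length_iff.2 huC
    have hRchain : (C.drop (C.idxOf u + 1) ++ C.take (C.idxOf u + 1)).Chain' A := by
      obtain ⟨-, hCchain, -, cx, cy, hcx, hcy, harc⟩ := id hCA
      refine List.isChain_append.2 ⟨hCchain.drop _, hCchain.take _, ?_⟩
      intro a ha b hb
      rw [List.getLast?_drop] at ha
      by_cases hds : C.length ≤ C.idxOf u + 1
      · rw [if_pos hds] at ha
        simp at ha
      · rw [if_neg hds, hcx] at ha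
        have hbt : (C.take (C.idxOf u + 1)).head? = C.head? := by
          rcases C with _ | ⟨c, t⟩
          · simp at hpC
          · simp [List.take]
        rw [hbt, hcy] at hb
        simp only [Option.mem_def, Option.some.injEq] at ha hb
        rw [← ha, ← hb]
        exact harc
    have hRnd : (C.drop (C.idxOf u + 1) ++ C.take (C.idxOf u + 1)).Nodup := by
      refine List.nodup_append.2 ⟨(C.drop_sublist _).nodup hCnd, (C.take_sublist _).nodup hCnd, ?_⟩
      intro a ha b hb he
      subst he
      exact (List.disjoint_take_drop hCnd le_rfl) hb ha
    have htakene : C.take (C.idxOf u + 1) ≠ [] := by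
      have hlt : (C.take (C.idxOf u + 1)).length = C.idxOf u + 1 := by
        rw [List.length_take]
        omega
      intro he
      rw [he] at hlt
      simp at hlt
    have hRlast : (C.drop (C.idxOf u + 1) ++ C.take (C.idxOf u + 1)).getLast? = some u := by
      rw [List.getLast?_append_of_ne_nil _ htakene, List.getLast?_eq_getElem?, List.length_take]
      have hmin1 : min (C.idxOf u + 1) C.length = C.idxOf u + 1 := by omega
      rw [hmin1]
      simp only [Nat.add_sub_cancel]
      rw [List.getElem?_take, if_pos (by omega), List.getElem?_eq_getElem hpC,
        List.getElem_idxOf hpC]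
    have hRlen : (C.drop (C.idxOf u + 1) ++ C.take (C.idxOf u + 1)).length = C.length := by
      rw [List.length_append, List.length_drop, List.length_take]
      omega
    have hRsub : ∀ x ∈ C.drop (C.idxOf u + 1) ++ C.take (C.idxOf u + 1), x ∈ C := by
      intro a ha
      rcases List.mem_append.1 ha with h' | h'
      · exact List.mem_of_mem_drop h'
      · exact List.mem_of_mem_take h'
    -- the segment of the rotated cycle ending at u, with q - P.length + 1 vertices
    set R := C.drop (C.idxOf u + 1) ++ C.take (C.idxOf u + 1) with hRdef
    set Seg := R.drop (R.length - (q - P.length + 1)) with hSegdef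
    have ht1C : q - P.length + 1 ≤ C.length := by
      have c1 : 3 ≤ q := hq3
      have c2 : 2 ≤ P.length := hm2
      have c3 : P.length ≤ q - 1 := hmq
      have c4 : q - 1 ≤ C.length := hClen
      omega
    have hSeglen : Seg.length = q - P.length + 1 := by
      rw [hSegdef, List.length_drop, hRlen]
      omega
    have hSegchain : Seg.Chain' A := hRchain.drop _
    have hSegnd : Seg.Nodup := (R.drop_sublist _).nodup hRnd
    have hSeglast : Seg.getLast? = some u := by
      rw [hSegdef, List.getLast?_drop, if_neg (by rw [hRlen]; omega)]
      exact hRlast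
    have hSegsub : ∀ x ∈ Seg, x ∈ C := fun x hx => hRsub x (List.mem_of_mem_drop hx)
    -- destructure P
    rcases P with _ | ⟨u', _ | ⟨b, P2⟩⟩
    · simp at hPu
    · simp at hm2
    · injection hPu with hPu'
      subst hPu'
      obtain ⟨x, hx, hxZ⟩ := hP.2.2.1
      have hxlast : (b :: P2).getLast? = some x := by
        rwa [List.getLast?_cons_cons] at hx
      refine ⟨Seg ++ (b :: P2), x, ?_, ?_, ?_, ?_, hxZ, ?_⟩
      · refine List.isChain_append.2 ⟨hSegchain, (List.isChain_cons_cons.1 hP.1).2, ?_⟩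
        intro a' ha' b' hb'
        rw [hSeglast] at ha'
        simp only [Option.mem_def, Option.some.injEq, List.head?_cons] at ha' hb'
        rw [← ha', ← hb']
        exact (List.isChain_cons_cons.1 hP.1).1
      · refine List.nodup_append.2 ⟨hSegnd, hP.2.1.of_cons, ?_⟩
        intro a' ha' c' hb' hce
        subst hce
        have haC : a' ∈ C := hSegsub a' ha'
        have haP : a' ∈ u' :: b :: P2 := List.mem_cons_of_mem _ hb'
        have hau : a' ≠ u' := by
          intro he
          subst he
          exact (List.nodup_cons.1 hP.2.1).1 hb'
        exact hdisj a' haP hau haC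
      · rw [List.length_append, hSeglen]
        simp only [List.length_cons] at hmq hm2 ⊢
        omega
      · rw [List.getLast?_append_of_ne_nil _ (List.cons_ne_nil _ _)]
        exact hxlast
      · rw [List.dropLast_append_of_ne_nil (List.cons_ne_nil _ _)]
        intro y hy
        rcases List.mem_append.1 hy with h' | h'
        · exact hCZ y (hSegsub y h')
        · have : y ∈ (u' :: b :: P2).dropLast := by
            rw [show (u' :: b :: P2).dropLast = u' :: (b :: P2).dropLast by simp]
            exact List.mem_cons_of_mem _ h'
          exact hP.2.2.2 y this
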